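/- In a polar graph of maximum total degree 3, a vertex v with several edges can be split: if v has at least two edges at each pole, replacing v by two vertices v1, v2 (each inheriting one pole's edges at one of its poles) joined by a new edge attached to the other poles yields a graph whose regular cycles correspond bijectively to regular cycles of the original graph, with the cycles through v gaining exactly the new edge. -/

import Mathlib

/-- A regular cycle in a polar graph (vertices `V`, each with two poles indexed by
`Bool`; edges `E` with endpoint poles given by `ends`) with edge set `C`: a cyclic
sequence of distinct vertices `vs` and distinct edges `es`, where edge `i` joins the
exit pole `(vs i, ps i)` to the entry pole `(vs (i+1), !(ps (i+1)))`, so the cycle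
enters and exits each of its vertices via opposite poles. -/
def IsRegCycle {V E : Type*} (ends : E → Sym2 (V × Bool)) (C : Set E) : Prop :=
  ∃ (m : ℕ) (vs : ℕ → V) (es : ℕ → E) (ps : ℕ → Bool),
    0 < m ∧
    (∀ i, vs (i + m) = vs i) ∧ (∀ i, es (i + m) = es i) ∧ (∀ i, ps (i + m) = ps i) ∧
    (∀ i, ends (es i) = s((vs i, ps i), (vs (i + 1), !(ps (i + 1))))) ∧
    (∀ i j : ℕ, i < j → j < m → vs i ≠ vs j) ∧
    (∀ i j : ℕ, i < j → j < m → es i ≠ es j) ∧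
    C = {e | ∃ i < m, es i = e}

/-- Splitting the vertex `v` into two vertices `Sum.inr true` and `Sum.inr false`:
edges formerly at pole `(v, b)` attach to the `true` pole of the new vertex `Sum.inr b`. -/
def splitPole {V : Type*} [DecidableEq V] (v : V) (p : V × Bool) : (V ⊕ Bool) × Bool :=
  if p.1 = v then (Sum.inr p.2, true) else (Sum.inl p.1, p.2)

/-- The endpoint map of the split graph: old edges are reattached via `splitPole`, and
the single new edge joins the free (`false`) poles of the two new vertices. -/
def splitEnds {V E : Type*} [DecidableEq V] (ends : E → Sym2 (V × Bool)) (v : V) :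
    E ⊕ Unit → Sym2 ((V ⊕ Bool) × Bool)
  | Sum.inl e => Sym2.map (splitPole v) (ends e)
  | Sum.inr _ => s(((Sum.inr true : V ⊕ Bool), false), ((Sum.inr false : V ⊕ Bool), false))

private lemma per_mod {X : Type*} {f : ℕ → X} {m : ℕ} (hm : 0 < m)
    (hf : ∀ i, f (i + m) = f i) : ∀ i, f i = f (i % m) := by
  intro i
  induction i using Nat.strong_induction_on with
  | _ i ih =>
    rcases lt_or_ge i m with h | h
    · rw [Nat.mod_eq_of_lt h]
    · obtain ⟨j, rfl⟩ := Nat.exists_eq_add_of_le h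
      rw [Nat.add_comm m j, hf j, Nat.add_mod_right]
      exact ih j (by omega)

private lemma per_eq {X : Type*} {f : ℕ → X} {m : ℕ} (hm : 0 < m)
    (hf : ∀ i, f (i + m) = f i) {a b : ℕ} (h : a % m = b % m) : f a = f b := by
  rw [per_mod hm hf a, per_mod hm hf b, h]

private lemma ne_of_per {X : Type*} {f : ℕ → X} {m : ℕ} (hm : 0 < m)
    (hf : ∀ i, f (i + m) = f i) (hd : ∀ i j, i < j → j < m → f i ≠ f j)
    {a b : ℕ} (h : a % m ≠ b % m) : f a ≠ f b := by
  intro he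
  rw [per_mod hm hf a, per_mod hm hf b] at he
  rcases Nat.lt_or_ge (a % m) (b % m) with h' | h'
  · exact hd _ _ h' (Nat.mod_lt _ hm) he
  · exact hd _ _ (lt_of_le_of_ne h' (Ne.symm h)) (Nat.mod_lt _ hm) he.symm

private def CD {V E : Type*} (ends : E → Sym2 (V × Bool)) (C : Set E)
    (m : ℕ) (vs : ℕ → V) (es : ℕ → E) (ps : ℕ → Bool) : Prop :=
  0 < m ∧
  (∀ i, vs (i + m) = vs i) ∧ (∀ i, es (i + m) = es i) ∧ (∀ i, ps (i + m) = ps i) ∧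
  (∀ i, ends (es i) = s((vs i, ps i), (vs (i + 1), !(ps (i + 1))))) ∧
  (∀ i j : ℕ, i < j → j < m → vs i ≠ vs j) ∧
  (∀ i j : ℕ, i < j → j < m → es i ≠ es j) ∧
  C = {e | ∃ i < m, es i = e}

private lemma CD.shift {V E : Type*} {ends : E → Sym2 (V × Bool)} {C : Set E}
    {m : ℕ} {vs : ℕ → V} {es : ℕ → E} {ps : ℕ → Bool}
    (h : CD ends C m vs es ps) (k : ℕ) :
    CD ends C m (fun i => vs (i + k)) (fun i => es (i + k)) (fun i => ps (i + k)) := by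
  obtain ⟨hm, hpv, hpe, hpp, hend, hdv, hde, hC⟩ := h
  have key : ∀ i j : ℕ, i < j → j < m → (i + k) % m ≠ (j + k) % m := by
    intro i j hij hjm hmod
    have h2 : i % m = j % m := Nat.ModEq.add_right_cancel' k hmod
    rw [Nat.mod_eq_of_lt (hij.trans hjm), Nat.mod_eq_of_lt hjm] at h2
    omega
  refine ⟨hm, fun i => ?_, fun i => ?_, fun i => ?_, fun i => ?_, ?_, ?_, ?_⟩
  · show vs (i + m + k) = vs (i + k); rw [show i + m + k = (i + k) + m by ring, hpv]
  · show es (i + m + k) = es (i + k); rw [show i + m + k = (i + k) + m by ring, hpe]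
  · show ps (i + m + k) = ps (i + k); rw [show i + m + k = (i + k) + m by ring, hpp]
  · show ends (es (i + k)) = s((vs (i + k), ps (i + k)), (vs (i + 1 + k), !(ps (i + 1 + k))))
    rw [show i + 1 + k = i + k + 1 by ring]; exact hend (i + k)
  · intro i j hij hjm; exact ne_of_per hm hpv hdv (key i j hij hjm)
  · intro i j hij hjm; exact ne_of_per hm hpe hde (key i j hij hjm)
  · rw [hC]; ext e; simp only [Set.mem_setOf_eq]
    constructor
    · rintro ⟨i, him, rfl⟩
      refine ⟨(i + m * k - k) % m, Nat.mod_lt _ hm, ?_⟩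
      have hx : (i + m * k - k) % m + k ≡ (i + m * k - k) + k [MOD m] :=
        Nat.ModEq.add_right k (Nat.mod_mod_of_dvd _ dvd_rfl)
      have hk : k ≤ m * k := Nat.le_mul_of_pos_left k hm
      rw [per_eq hm hpe hx, show i + m * k - k + k = i + m * k by omega]
      exact per_eq hm hpe (by rw [Nat.add_mul_mod_self_left])
    · rintro ⟨j, hjm, rfl⟩
      exact ⟨(j + k) % m, Nat.mod_lt _ hm, (per_mod hm hpe (j + k)).symm⟩

private lemma splitPole_v {V : Type*} [DecidableEq V] (v : V) (b : Bool) :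
    splitPole v (v, b) = (Sum.inr b, true) := by simp [splitPole]

private lemma splitPole_ne {V : Type*} [DecidableEq V] {v w : V} (h : w ≠ v) (b : Bool) :
    splitPole v (w, b) = (Sum.inl w, b) := by simp [splitPole, h]

private lemma splitPole_inj {V : Type*} [DecidableEq V] (v : V) :
    Function.Injective (splitPole v) := by
  rintro ⟨a, b⟩ ⟨c, d⟩ h
  by_cases h1 : a = v <;> by_cases h2 : c = v <;> simp_all [splitPole]

/-- Splitting a vertex `v` that has at least two edges at each pole: a set `C` of edges
forms a regular cycle in the original polar graph if and only if the corresponding set in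
the split graph—together with the new edge exactly when the cycle passes through `v`—
forms a regular cycle there. -/
theorem stmt15 {V E : Type*} [DecidableEq V] (ends : E → Sym2 (V × Bool)) (v : V)
    (h2t : ∃ e f : E, e ≠ f ∧ (v, true) ∈ ends e ∧ (v, true) ∈ ends f)
    (h2f : ∃ e f : E, e ≠ f ∧ (v, false) ∈ ends e ∧ (v, false) ∈ ends f) :
    ∀ C : Set E,
      IsRegCycle ends C ↔
      IsRegCycle (splitEnds ends v)
        (Sum.inl '' C ∪
          {x : E ⊕ Unit | x = Sum.inr () ∧ ∃ e ∈ C, ∃ b : Bool, (v, b) ∈ ends e}) := by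
  intro C
  constructor
  · rintro ⟨m, vs, es, ps, hcd⟩
    have hcd0 : CD ends C m vs es ps := hcd
    clear hcd
    by_cases hvv : ∃ i < m, vs i = v
    · -- cycle passes through v
      obtain ⟨i0, hi0, hvi0⟩ := hvv
      obtain ⟨vs', es', ps', hv0, hcd'⟩ :
          ∃ vs' es' ps', vs' 0 = v ∧ CD ends C m vs' es' ps' :=
        ⟨_, _, _, by simpa using hvi0, hcd0.shift i0⟩
      clear hcd0 hvi0 hi0
      obtain ⟨hm, hpv, hpe, hpp, hend, hdv, hde, hC⟩ := hcd'
      set n := m + 1 with hn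
      obtain ⟨b, hb⟩ : ∃ b, ps' 0 = b := ⟨_, rfl⟩
      have hvne : ∀ j, 0 < j → j < m → vs' j ≠ v := by
        intro j h1 h2 he
        exact hdv 0 j h1 h2 (hv0.trans he.symm)
      have hvm : vs' m = v := by rw [← hv0]; simpa using hpv 0
      have hpm : ps' m = b := by simpa [hb] using hpp 0
      refine ⟨n,
        fun i => if i % n = 0 then Sum.inr b else if i % n = m then Sum.inr (!b)
          else Sum.inl (vs' (i % n)),
        fun i => if i % n = m then Sum.inr () else Sum.inl (es' (i % n)),
        fun i => if i % n = 0 then true else if i % n = m then false else ps' (i % n),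
        by omega, fun i => by simp [Nat.add_mod_right], fun i => by simp [Nat.add_mod_right],
        fun i => by simp [Nat.add_mod_right], fun i => ?_, ?_, ?_, ?_⟩
      · -- edge condition
        have hjlt : i % n < n := Nat.mod_lt _ (by omega)
        have e1 : (i + 1) % n = (i % n + 1) % n :=
          Nat.ModEq.add_right 1 (Nat.mod_mod_of_dvd i dvd_rfl).symm
        simp only [e1, Nat.mod_mod_of_dvd _ dvd_rfl]
        set j := i % n with hjdef
        by_cases hjm : j = m
        · -- the new edge
          have hk : (j + 1) % n = 0 := by rw [hjm, hn]; simp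
          rw [hk, hjm]
          split_ifs <;>
            first
              | omega
              | (exact False.elim (by assumption))
              | (simp only [splitEnds, Bool.not_true]
                 cases b
                 · rfl
                 · exact Sym2.eq_swap)
        · -- an old edge
          have hjm' : j < m := by omega
          have hk : (j + 1) % n = j + 1 := Nat.mod_eq_of_lt (by omega)
          rw [hk, if_neg hjm]
          show splitEnds ends v (Sum.inl (es' j)) = _
          simp only [splitEnds]
          rw [hend j, Sym2.map_pair_eq]
          by_cases hj0 : j = 0
          · rw [hj0, hv0, hb, splitPole_v]
            by_cases hm1 : m = 1
            · rw [show vs' (0 + 1) = v by rw [show (0:ℕ)+1 = m by omega, hvm],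
                show ps' (0 + 1) = b by rw [show (0:ℕ)+1 = m by omega, hpm], splitPole_v]
              split_ifs <;> first | rfl | omega | (exact False.elim (by assumption))
            · rw [splitPole_ne (hvne (0 + 1) (by omega) (by omega))]
              split_ifs <;> first | rfl | omega | (exact False.elim (by assumption))
          · rw [splitPole_ne (hvne j (by omega) hjm')]
            by_cases hjm1 : j + 1 = m
            · rw [show vs' (j+1) = v by rw [hjm1, hvm],
                show ps' (j+1) = b by rw [hjm1, hpm], splitPole_v]
              split_ifs <;> first | rfl | omega | (exact False.elim (by assumption))
            · rw [splitPole_ne (hvne (j+1) (by omega) (by omega))]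
              split_ifs <;> first | rfl | omega | (exact False.elim (by assumption))
      · -- vertex distinctness
        intro i j hij hjn h
        have hi : i % n = i := Nat.mod_eq_of_lt (by omega)
        have hjj : j % n = j := Nat.mod_eq_of_lt hjn
        simp only [hi, hjj] at h
        have him : i < m := by omega
        have hj0 : j ≠ 0 := by omega
        rw [if_neg (show ¬ i = m by omega), if_neg hj0] at h
        by_cases hi0 : i = 0
        · rw [if_pos hi0] at h
          by_cases hjm : j = m
          · rw [if_pos hjm] at h
            simp at h
          · rw [if_neg hjm] at h
            exact nomatch h
        · rw [if_neg hi0] at h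
          by_cases hjm : j = m
          · rw [if_pos hjm] at h
            exact nomatch h
          · rw [if_neg hjm] at h
            exact hdv i j hij (by omega) (Sum.inl.inj h)
      · -- edge distinctness
        intro i j hij hjn h
        have hi : i % n = i := Nat.mod_eq_of_lt (by omega)
        have hjj : j % n = j := Nat.mod_eq_of_lt hjn
        simp only [hi, hjj] at h
        rw [if_neg (show ¬ i = m by omega)] at h
        by_cases hjm : j = m
        · rw [if_pos hjm] at h
          exact nomatch h
        · rw [if_neg hjm] at h
          exact hde i j hij (by omega) (Sum.inl.inj h)
      · -- edge set
        ext x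
        rcases x with e | u
        · simp only [Set.mem_union, Set.mem_image, Set.mem_setOf_eq]
          constructor
          · rintro (⟨e', he', heq⟩ | ⟨habs, _⟩)
            · obtain rfl : e' = e := Sum.inl.inj heq
              rw [hC] at he'
              obtain ⟨i, him, rfl⟩ := he'
              refine ⟨i, by omega, ?_⟩
              rw [Nat.mod_eq_of_lt (show i < n by omega), if_neg (show ¬ i = m by omega)]
            · exact nomatch habs
          · rintro ⟨i, hin, heq⟩
            left
            by_cases him : i % n = m
            · rw [if_pos him] at heq; exact nomatch heq
            · rw [if_neg him] at heq
              have hi : i % n < n := Nat.mod_lt _ (by omega)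
              refine ⟨es' (i % n), ?_, heq⟩
              rw [hC]; exact ⟨i % n, by omega, rfl⟩
        · cases u
          simp only [Set.mem_union, Set.mem_image, Set.mem_setOf_eq]
          constructor
          · intro _
            exact ⟨m, by omega, by rw [Nat.mod_eq_of_lt (by omega), if_pos rfl]⟩
          · intro _
            right
            refine ⟨trivial, es' 0, ?_, b, ?_⟩
            · rw [hC]; exact ⟨0, hm, rfl⟩
            · rw [hend 0, hv0, hb]
              exact Sym2.mem_mk_left _ _
    · -- cycle avoids v
      obtain ⟨hm, hpv, hpe, hpp, hend, hdv, hde, hC⟩ := hcd0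
      have hv' : ∀ i, vs i ≠ v := by
        intro i h
        exact hvv ⟨i % m, Nat.mod_lt _ hm, by rw [← per_mod hm hpv i]; exact h⟩
      refine ⟨m, fun i => Sum.inl (vs i), fun i => Sum.inl (es i), ps, hm,
        fun i => by simp [hpv i], fun i => by simp [hpe i], hpp, fun i => ?_, ?_, ?_, ?_⟩
      · show splitEnds ends v (Sum.inl (es i)) = _
        simp only [splitEnds]
        rw [hend i, Sym2.map_pair_eq, splitPole_ne (hv' i), splitPole_ne (hv' (i+1))]
      · intro i j hij hjm h
        exact hdv i j hij hjm (Sum.inl.inj h)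
      · intro i j hij hjm h
        exact hde i j hij hjm (Sum.inl.inj h)
      · have hS : {x : E ⊕ Unit | x = Sum.inr () ∧ ∃ e ∈ C, ∃ b : Bool, (v, b) ∈ ends e}
            = ∅ := by
          ext x
          simp only [Set.mem_setOf_eq, Set.mem_empty_iff_false, iff_false, not_and]
          rintro rfl ⟨e, heC, bb, hbb⟩
          rw [hC] at heC; obtain ⟨i, him, rfl⟩ := heC
          rw [hend i, Sym2.mem_iff] at hbb
          rcases hbb with h | h
          · exact hv' i (congrArg Prod.fst h).symm
          · exact hv' (i+1) (congrArg Prod.fst h).symm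
        rw [hS, Set.union_empty, hC]
        ext x
        rcases x with e | u
        · simp only [Set.mem_image, Set.mem_setOf_eq]
          constructor
          · rintro ⟨e', ⟨i, him, rfl⟩, h⟩
            exact ⟨i, him, h⟩
          · rintro ⟨i, him, h⟩
            exact ⟨es i, ⟨i, him, rfl⟩, h⟩
        · simp
  · rintro ⟨m', vs', es', ps', hcd⟩
    have hcd0 : CD (splitEnds ends v)
        (Sum.inl '' C ∪
          {x : E ⊕ Unit | x = Sum.inr () ∧ ∃ e ∈ C, ∃ b : Bool, (v, b) ∈ ends e})
        m' vs' es' ps' := hcd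
    clear hcd
    by_cases hnew : ∃ i, es' i = Sum.inr ()
    · -- the cycle uses the new edge
      obtain ⟨i1, hi1⟩ := hnew
      have hm0 : 0 < m' := hcd0.1
      have hpe0 : ∀ i, es' (i + m') = es' i := hcd0.2.2.1
      obtain ⟨m, rfl⟩ : ∃ m, m' = m + 1 := ⟨m' - 1, by omega⟩
      obtain ⟨vs2, es2, ps2, hlast, hcd2⟩ :
          ∃ vs2 es2 ps2, es2 m = Sum.inr () ∧
            CD (splitEnds ends v)
              (Sum.inl '' C ∪
                {x : E ⊕ Unit | x = Sum.inr () ∧ ∃ e ∈ C, ∃ b : Bool, (v, b) ∈ ends e})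
              (m + 1) vs2 es2 ps2 := by
        refine ⟨_, _, _, ?_, hcd0.shift (i1 % (m + 1) + 1)⟩
        show es' (m + (i1 % (m + 1) + 1)) = Sum.inr ()
        rw [show m + (i1 % (m + 1) + 1) = i1 % (m + 1) + (m + 1) by ring, hpe0,
          ← per_mod hm0 hpe0, hi1]
      clear hcd0 hi1 hpe0
      obtain ⟨hm, hpv, hpe, hpp, hend, hdv, hde, hC⟩ := hcd2
      have hvC : ∃ e ∈ C, ∃ bb : Bool, (v, bb) ∈ ends e := by
        have hinrD : (Sum.inr () : E ⊕ Unit) ∈ Sum.inl '' C ∪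
            {x : E ⊕ Unit | x = Sum.inr () ∧ ∃ e ∈ C, ∃ b : Bool, (v, b) ∈ ends e} := by
          rw [hC]; exact ⟨m, by omega, hlast⟩
        rcases hinrD with ⟨e, _, habs⟩ | ⟨_, h⟩
        · exact nomatch habs
        · exact h
      have hm1 : 0 < m := by
        obtain ⟨e, heC, _⟩ := hvC
        have h1 : (Sum.inl e : E ⊕ Unit) ∈ Sum.inl '' C ∪
            {x : E ⊕ Unit | x = Sum.inr () ∧ ∃ e ∈ C, ∃ b : Bool, (v, b) ∈ ends e} :=
          Or.inl ⟨e, heC, rfl⟩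
        rw [hC] at h1
        obtain ⟨i, him, hi⟩ := h1
        by_contra h0
        have : i = m := by omega
        rw [this, hlast] at hi
        exact nomatch hi
      have hnewend := hend m
      rw [hlast] at hnewend
      have hv21 : vs2 (m+1) = vs2 0 := by simpa using hpv 0
      have hp21 : ps2 (m+1) = ps2 0 := by simpa using hpp 0
      rw [hv21, hp21] at hnewend
      simp only [splitEnds] at hnewend
      rw [Sym2.eq_iff] at hnewend
      obtain ⟨b, hvs0, hvsm, hps0, hpsm⟩ :
          ∃ b, vs2 0 = Sum.inr b ∧ vs2 m = Sum.inr (!b) ∧ ps2 0 = true ∧ ps2 m = false := by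
        rcases hnewend with ⟨h1, h2⟩ | ⟨h1, h2⟩
        · refine ⟨false, (congrArg Prod.fst h2).symm, (congrArg Prod.fst h1).symm, ?_,
            (congrArg Prod.snd h1).symm⟩
          have := (congrArg Prod.snd h2).symm
          simpa using this
        · refine ⟨true, (congrArg Prod.fst h1).symm, (congrArg Prod.fst h2).symm, ?_,
            (congrArg Prod.snd h2).symm⟩
          have := (congrArg Prod.snd h1).symm
          simpa using this
      have hEl : ∀ j, j < m → ∃ e, es2 j = Sum.inl e := by
        intro j hj
        cases h : es2 j with
        | inl e => exact ⟨e, rfl⟩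
        | inr u => exact absurd (h.trans hlast.symm) (hde j m hj (by omega))
      obtain ⟨e₀, he₀⟩ := hEl 0 hm1
      set F : E ⊕ Unit → E := Sum.elim id (fun _ => e₀) with hF
      set P : V ⊕ Bool → V := Sum.elim id (fun _ => v) with hP
      have hinl : ∀ j, j < m → es2 j = Sum.inl (F (es2 j)) := by
        intro j hj; obtain ⟨e, he⟩ := hEl j hj; rw [he]; rfl
      have hMem : ∀ j, j < m → F (es2 j) ∈ C := by
        intro j hj
        have h1 : es2 j ∈ Sum.inl '' C ∪
            {x : E ⊕ Unit | x = Sum.inr () ∧ ∃ e ∈ C, ∃ b : Bool, (v, b) ∈ ends e} := by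
          rw [hC]; exact ⟨j, by omega, rfl⟩
        rcases h1 with ⟨e, heC, heq⟩ | ⟨habs, _⟩
        · rw [← heq]; simpa [hF] using heC
        · exact absurd (habs.trans hlast.symm) (hde j m hj (by omega))
      have hW : ∀ j, 0 < j → j < m → ∃ w, w ≠ v ∧ vs2 j = Sum.inl w := by
        intro j hj0 hj
        have h1 := hend j
        rw [hinl j hj] at h1
        simp only [splitEnds] at h1
        have h2 : (vs2 j, ps2 j) ∈ Sym2.map (splitPole v) (ends (F (es2 j))) := by
          rw [h1]; exact Sym2.mem_mk_left _ _
        rw [Sym2.mem_map] at h2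
        obtain ⟨⟨w, c⟩, _, hsp⟩ := h2
        by_cases hwv : w = v
        · subst hwv
          rw [splitPole_v] at hsp
          have hj' : vs2 j = Sum.inr c := (congrArg Prod.fst hsp).symm
          have d1 : vs2 j ≠ vs2 0 := fun h => hdv 0 j hj0 (by omega) h.symm
          have d2 : vs2 j ≠ vs2 m := hdv j m hj (by omega)
          rw [hj', hvs0] at d1; rw [hj', hvsm] at d2
          cases c <;> cases b
          · exact absurd rfl d1
          · exact absurd rfl d2
          · exact absurd rfl d2
          · exact absurd rfl d1
        · rw [splitPole_ne hwv] at hsp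
          exact ⟨w, hwv, (congrArg Prod.fst hsp).symm⟩
      refine ⟨m, fun i => P (vs2 (i % m)), fun i => F (es2 (i % m)),
        fun i => if i % m = 0 then b else ps2 (i % m), hm1,
        fun i => by simp [Nat.add_mod_right], fun i => by simp [Nat.add_mod_right],
        fun i => by simp [Nat.add_mod_right], fun i => ?_, ?_, ?_, ?_⟩
      · -- edge condition
        have e1 : (i + 1) % m = (i % m + 1) % m :=
          Nat.ModEq.add_right 1 (Nat.mod_mod_of_dvd i dvd_rfl).symm
        have hjlt : i % m < m := Nat.mod_lt _ hm1
        simp only [e1, Nat.mod_mod_of_dvd _ dvd_rfl]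
        set j := i % m with hjdef
        by_cases hjm : j + 1 = m
        · have hk : (j + 1) % m = 0 := by rw [hjm]; simp
          rw [hk]
          by_cases hj0 : j = 0
          · -- m = 1, loop at v
            have hm'1 : m = 1 := by omega
            have hvj : vs2 j = Sum.inr b := by rw [hj0, hvs0]
            have hv1 : vs2 (j + 1) = Sum.inr (!b) := by rw [hjm, hvsm]
            have hp1 : ps2 (j + 1) = false := by rw [hjm, hpsm]
            have h1 := hend j
            rw [hinl j hjlt] at h1
            simp only [splitEnds] at h1
            rw [hvj, hv1, hp1, show ps2 j = true by rw [hj0, hps0]] at h1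
            simp only [Bool.not_false] at h1
            rw [show ((Sum.inr b : V ⊕ Bool), true) = splitPole v (v, b) from
                (splitPole_v v b).symm,
              show ((Sum.inr (!b) : V ⊕ Bool), true) = splitPole v (v, !b) from
                (splitPole_v v (!b)).symm,
              ← Sym2.map_pair_eq] at h1
            rw [Sym2.map.injective (splitPole_inj v) h1]
            rw [if_pos hj0, if_pos rfl]
            simp [hP, hvj, hvs0]
          · -- last old edge, j > 0
            obtain ⟨w, hwv, hweq⟩ := hW j (by omega) (by omega)
            have h1 := hend j
            rw [hinl j hjlt] at h1
            simp only [splitEnds] at h1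
            rw [hweq, hjm, hvsm, hpsm] at h1
            simp only [Bool.not_false] at h1
            rw [show ((Sum.inl w : V ⊕ Bool), ps2 j) = splitPole v (w, ps2 j) from
                (splitPole_ne hwv _).symm,
              show ((Sum.inr (!b) : V ⊕ Bool), true) = splitPole v (v, !b) from
                (splitPole_v v (!b)).symm,
              ← Sym2.map_pair_eq] at h1
            rw [Sym2.map.injective (splitPole_inj v) h1]
            rw [if_neg hj0, if_pos rfl]
            simp [hP, hweq, hvs0]
        · -- next index not wrapped
          have hk : (j + 1) % m = j + 1 := Nat.mod_eq_of_lt (by omega)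
          rw [hk]
          obtain ⟨w', hwv', hweq'⟩ := hW (j + 1) (by omega) (by omega)
          have h1 := hend j
          rw [hinl j hjlt] at h1
          simp only [splitEnds] at h1
          by_cases hj0 : j = 0
          · have hvj : vs2 j = Sum.inr b := by rw [hj0, hvs0]
            have hpj : ps2 j = true := by rw [hj0, hps0]
            rw [hvj, hpj, hweq'] at h1
            rw [show ((Sum.inr b : V ⊕ Bool), true) = splitPole v (v, b) from
                (splitPole_v v b).symm,
              show ((Sum.inl w' : V ⊕ Bool), !(ps2 (j+1))) = splitPole v (w', !(ps2 (j+1)))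
                from (splitPole_ne hwv' _).symm,
              ← Sym2.map_pair_eq] at h1
            rw [Sym2.map.injective (splitPole_inj v) h1]
            rw [if_pos hj0, if_neg (show ¬ j + 1 = 0 by omega)]
            simp [hP, hvj, hweq']
          · obtain ⟨w, hwv, hweq⟩ := hW j (by omega) (by omega)
            rw [hweq, hweq'] at h1
            rw [show ((Sum.inl w : V ⊕ Bool), ps2 j) = splitPole v (w, ps2 j) from
                (splitPole_ne hwv _).symm,
              show ((Sum.inl w' : V ⊕ Bool), !(ps2 (j+1))) = splitPole v (w', !(ps2 (j+1)))
                from (splitPole_ne hwv' _).symm,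
              ← Sym2.map_pair_eq] at h1
            rw [Sym2.map.injective (splitPole_inj v) h1]
            rw [if_neg hj0, if_neg (show ¬ j + 1 = 0 by omega)]
            simp [hP, hweq, hweq']
      · -- vertex distinctness
        intro i j hij hjm' h
        have hi : i % m = i := Nat.mod_eq_of_lt (by omega)
        have hj : j % m = j := Nat.mod_eq_of_lt hjm'
        simp only [hi, hj] at h
        by_cases hi0 : i = 0
        · subst hi0
          obtain ⟨w, hwv, hweq⟩ := hW j hij hjm'
          rw [hvs0, hweq] at h
          exact hwv (by simpa [hP] using h.symm)
        · obtain ⟨wi, hwiv, hwieq⟩ := hW i (by omega) (by omega)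
          obtain ⟨wj, hwjv, hwjeq⟩ := hW j (by omega) hjm'
          rw [hwieq, hwjeq] at h
          simp only [hP, Sum.elim_inl, id] at h
          exact hdv i j hij (by omega) (by rw [hwieq, hwjeq, h])
      · -- edge distinctness
        intro i j hij hjm' h
        have hi : i % m = i := Nat.mod_eq_of_lt (by omega)
        have hj : j % m = j := Nat.mod_eq_of_lt hjm'
        simp only [hi, hj] at h
        have h2 := congrArg (Sum.inl : E → E ⊕ Unit) h
        rw [← hinl i (by omega), ← hinl j hjm'] at h2
        exact hde i j hij (by omega) h2
      · -- edge set
        ext e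
        simp only [Set.mem_setOf_eq]
        constructor
        · intro heC
          have h1 : (Sum.inl e : E ⊕ Unit) ∈ Sum.inl '' C ∪
              {x : E ⊕ Unit | x = Sum.inr () ∧ ∃ e ∈ C, ∃ b : Bool, (v, b) ∈ ends e} :=
            Or.inl ⟨e, heC, rfl⟩
          rw [hC] at h1
          obtain ⟨i, him, hi⟩ := h1
          have hlt : i < m := by
            rcases Nat.lt_or_ge i m with h' | h'
            · exact h'
            · exfalso
              have : i = m := by omega
              rw [this, hlast] at hi
              exact nomatch hi
          refine ⟨i, hlt, ?_⟩
          rw [Nat.mod_eq_of_lt hlt, hi]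
          rfl
        · rintro ⟨i, him, rfl⟩
          rw [Nat.mod_eq_of_lt him]
          exact hMem i him
    · -- the cycle avoids the new edge
      obtain ⟨hm, hpv, hpe, hpp, hend, hdv, hde, hC⟩ := hcd0
      have hEl : ∀ i, ∃ e, es' i = Sum.inl e := by
        intro i
        cases h : es' i with
        | inl e => exact ⟨e, rfl⟩
        | inr u => exact absurd ⟨i, by cases u; exact h⟩ hnew
      choose eOf hEOf using hEl
      have hMem : ∀ i, eOf i ∈ C := by
        intro i
        have h1 : es' i ∈ Sum.inl '' C ∪
            {x : E ⊕ Unit | x = Sum.inr () ∧ ∃ e ∈ C, ∃ b : Bool, (v, b) ∈ ends e} := by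
          rw [hC]; exact ⟨i % m', Nat.mod_lt _ hm, (per_mod hm hpe i).symm⟩
        rcases h1 with ⟨e, heC, heq⟩ | ⟨habs, _⟩
        · rw [hEOf i] at heq
          obtain rfl := Sum.inl.inj heq
          exact heC
        · rw [hEOf i] at habs
          exact nomatch habs
      have hT : ∀ e ∈ C, ∀ bb : Bool, (v, bb) ∉ ends e := by
        intro e heC bb hbb
        have h1 : (Sum.inr () : E ⊕ Unit) ∈ Sum.inl '' C ∪
            {x : E ⊕ Unit | x = Sum.inr () ∧ ∃ e ∈ C, ∃ b : Bool, (v, b) ∈ ends e} :=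
          Or.inr ⟨rfl, e, heC, bb, hbb⟩
        rw [hC] at h1
        obtain ⟨i, _, hi⟩ := h1
        exact hnew ⟨i, hi⟩
      have hW : ∀ i, ∃ w, w ≠ v ∧ vs' i = Sum.inl w := by
        intro i
        have h1 := hend i
        rw [hEOf i] at h1
        simp only [splitEnds] at h1
        have h2 : (vs' i, ps' i) ∈ Sym2.map (splitPole v) (ends (eOf i)) := by
          rw [h1]; exact Sym2.mem_mk_left _ _
        rw [Sym2.mem_map] at h2
        obtain ⟨⟨w, c⟩, hmem, hsp⟩ := h2
        by_cases hwv : w = v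
        · subst hwv
          exact absurd hmem (hT _ (hMem i) c)
        · rw [splitPole_ne hwv] at hsp
          exact ⟨w, hwv, (congrArg Prod.fst hsp).symm⟩
      choose wOf hWv hWeq using hW
      refine ⟨m', wOf, eOf, ps', hm, fun i => ?_, fun i => ?_, hpp, fun i => ?_, ?_, ?_, ?_⟩
      · have h := hpv i
        rw [hWeq (i + m'), hWeq i] at h
        exact Sum.inl.inj h
      · have h := hpe i
        rw [hEOf (i + m'), hEOf i] at h
        exact Sum.inl.inj h
      · have h1 := hend i
        rw [hEOf i] at h1
        simp only [splitEnds] at h1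
        rw [hWeq i, hWeq (i+1)] at h1
        rw [show ((Sum.inl (wOf i) : V ⊕ Bool), ps' i) = splitPole v (wOf i, ps' i) from
            (splitPole_ne (hWv i) _).symm,
          show ((Sum.inl (wOf (i+1)) : V ⊕ Bool), !(ps' (i+1)))
              = splitPole v (wOf (i+1), !(ps' (i+1))) from (splitPole_ne (hWv (i+1)) _).symm,
          ← Sym2.map_pair_eq] at h1
        exact Sym2.map.injective (splitPole_inj v) h1
      · intro i j hij hjm h
        exact hdv i j hij hjm (by rw [hWeq i, hWeq j, h])
      · intro i j hij hjm h
        exact hde i j hij hjm (by rw [hEOf i, hEOf j, h])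
      · ext e
        simp only [Set.mem_setOf_eq]
        constructor
        · intro heC
          have h1 : (Sum.inl e : E ⊕ Unit) ∈ Sum.inl '' C ∪
              {x : E ⊕ Unit | x = Sum.inr () ∧ ∃ e ∈ C, ∃ b : Bool, (v, b) ∈ ends e} :=
            Or.inl ⟨e, heC, rfl⟩
          rw [hC] at h1
          obtain ⟨i, him, hi⟩ := h1
          rw [hEOf i] at hi
          exact ⟨i, him, Sum.inl.inj hi⟩
        · rintro ⟨i, him, rfl⟩
          exact hMem i
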